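/- Assume the setup below, and let U ∈ ℝ^{d×d} be symmetric positive definite with U ≼ (1/L_Ω)I. Fix w_t ∈ ℝ^d, v ∈ ℝ^d, define g = U^{-1}( w_t − prox_R^{U^{-1}}(w_t − U v) ), w_{t+1} = w_t − U g, and δ = ∇F(w_t) − v. Then for any minimizer w_* of P, (w_* − w_t)ᵀg + (1/2)‖g‖_U² ≤ P(w_*) − P(w_{t+1}) − ⟨w_* − w_{t+1}, δ⟩. -/

import Mathlib

open scoped BigOperators RealInnerProductSpace

/-- `ℝ^d` as Euclidean space. -/
abbrev Euc (d : ℕ) := EuclideanSpace ℝ (Fin d)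

/-- Action of a `d × d` real matrix on a vector of `ℝ^d`. -/
noncomputable def mdot {d : ℕ} (M : Matrix (Fin d) (Fin d) ℝ) (x : Euc d) : Euc d :=
  Matrix.toEuclideanLin M x

/-- The quadratic form `‖x‖_M² = xᵀ M x` associated with a matrix `M`. -/
noncomputable def qf {d : ℕ} (M : Matrix (Fin d) (Fin d) ℝ) (x : Euc d) : ℝ :=
  ⟪x, mdot M x⟫

/-- `u` is a point of the scaled proximal operator `prox_R^M (w)`, i.e. a minimizer of
`y ↦ (1/2)‖y - w‖_M² + R y`, for an extended-real-valued `R`. -/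
def IsProxE {d : ℕ} (R : Euc d → EReal) (M : Matrix (Fin d) (Fin d) ℝ) (w u : Euc d) : Prop :=
  ∀ y, ((2⁻¹ * qf M (u - w) : ℝ) : EReal) + R u ≤ ((2⁻¹ * qf M (y - w) : ℝ) : EReal) + R y

/-- Convexity of an extended-real-valued function on `ℝ^d`. -/
def ERealConvexOn {d : ℕ} (R : Euc d → EReal) : Prop :=
  ∀ x y : Euc d, ∀ a b : ℝ, 0 ≤ a → 0 ≤ b → a + b = 1 →
    R (a • x + b • y) ≤ (a : EReal) * R x + (b : EReal) * R y

/-- Properness of an extended-real-valued function: never `-∞`, and finite somewhere. -/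
def ERealProper {d : ℕ} (R : Euc d → EReal) : Prop :=
  (∀ x, R x ≠ ⊥) ∧ (∃ x, R x ≠ ⊤)

/-- The average `F = (1/n) ∑ᵢ fᵢ`. -/
noncomputable def Favg {d n : ℕ} (f : Fin n → Euc d → ℝ) (x : Euc d) : ℝ :=
  (n : ℝ)⁻¹ * ∑ i, f i x

/-- The averaged gradient `∇F = (1/n) ∑ᵢ ∇fᵢ`. -/
noncomputable def gAvg {d n : ℕ} (gf : Fin n → Euc d → Euc d) (x : Euc d) : Euc d :=
  (n : ℝ)⁻¹ • ∑ i, gf i x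

/-- The composite objective `P = F + R` with extended-real-valued `R`. -/
noncomputable def Pobj {d n : ℕ} (f : Fin n → Euc d → ℝ) (R : Euc d → EReal) (x : Euc d) :
    EReal := ((Favg f x : ℝ) : EReal) + R x

section AuxMatrix

open Matrix

variable {d : ℕ}

lemma mdot_add (M : Matrix (Fin d) (Fin d) ℝ) (x y : Euc d) :
    mdot M (x + y) = mdot M x + mdot M y := map_add _ _ _

lemma mdot_sub (M : Matrix (Fin d) (Fin d) ℝ) (x y : Euc d) :
    mdot M (x - y) = mdot M x - mdot M y := map_sub _ _ _

lemma mdot_smul (M : Matrix (Fin d) (Fin d) ℝ) (c : ℝ) (x : Euc d) :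
    mdot M (c • x) = c • mdot M x := map_smul _ _ _

lemma mdot_neg (M : Matrix (Fin d) (Fin d) ℝ) (x : Euc d) :
    mdot M (-x) = -mdot M x := map_neg (Matrix.toEuclideanLin M) x

lemma mdot_mdot (A B : Matrix (Fin d) (Fin d) ℝ) (x : Euc d) :
    mdot A (mdot B x) = mdot (A * B) x := by
  simp [mdot, Matrix.toEuclideanLin_apply, Matrix.mulVec_mulVec]

lemma mdot_one (x : Euc d) : mdot 1 x = x := by
  simp [mdot, Matrix.toEuclideanLin_apply]

lemma mdot_msub (A B : Matrix (Fin d) (Fin d) ℝ) (x : Euc d) :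
    mdot (A - B) x = mdot A x - mdot B x := by
  simp [mdot, map_sub]

lemma mdot_msmul (c : ℝ) (A : Matrix (Fin d) (Fin d) ℝ) (x : Euc d) :
    mdot (c • A) x = c • mdot A x := by
  simp [mdot, _root_.map_smul]

lemma inner_mdot (M : Matrix (Fin d) (Fin d) ℝ) (x y : Euc d) :
    ⟪x, mdot M y⟫ =
      dotProduct (WithLp.equiv 2 (Fin d → ℝ) x) (M *ᵥ (WithLp.equiv 2 (Fin d → ℝ) y)) := by
  simp [mdot, Matrix.toEuclideanLin_apply, PiLp.inner_apply, dotProduct,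
    RCLike.inner_apply, conj_trivial, mul_comm]

lemma inner_mdot_comm (M : Matrix (Fin d) (Fin d) ℝ) (hM : M.IsHermitian) (x y : Euc d) :
    ⟪mdot M x, y⟫ = ⟪x, mdot M y⟫ := by
  have hMt : Mᵀ = M := by
    have h2 := hM
    rw [Matrix.IsHermitian] at h2
    rw [← h2]
    ext i j
    simpa using hM.apply j i
  rw [real_inner_comm, inner_mdot, inner_mdot, Matrix.dotProduct_mulVec,
    ← Matrix.mulVec_transpose, hMt, dotProduct_comm]

lemma qf_nonneg {M : Matrix (Fin d) (Fin d) ℝ} (hM : M.PosSemidef) (x : Euc d) :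
    0 ≤ qf M x := by
  have := hM.dotProduct_mulVec_nonneg (WithLp.equiv 2 (Fin d → ℝ) x)
  simpa [qf, inner_mdot] using this

lemma qf_pos {M : Matrix (Fin d) (Fin d) ℝ} (hM : M.PosDef) {x : Euc d} (hx : x ≠ 0) :
    0 < qf M x := by
  have hx' : (WithLp.equiv 2 (Fin d → ℝ) x) ≠ 0 := by
    intro h
    apply hx
    exact (WithLp.equiv 2 _).injective (by simpa using h)
  have := hM.dotProduct_mulVec_pos hx'
  simpa [qf, inner_mdot] using this

lemma qf_smul (M : Matrix (Fin d) (Fin d) ℝ) (c : ℝ) (x : Euc d) :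
    qf M (c • x) = c ^ 2 * qf M x := by
  rw [qf, mdot_smul, real_inner_smul_left, real_inner_smul_right, qf]
  ring

lemma qf_expand (M : Matrix (Fin d) (Fin d) ℝ) (hM : M.IsHermitian) (a b : Euc d) :
    qf M (a + b) = qf M a + 2 * ⟪a, mdot M b⟫ + qf M b := by
  simp only [qf, mdot_add, inner_add_left, inner_add_right]
  have h1 : ⟪b, mdot M a⟫ = ⟪a, mdot M b⟫ := by
    rw [← inner_mdot_comm M hM a b, real_inner_comm]
  linarith

end AuxMatrix

section AuxGradient

open Filter Topology

variable {E : Type*} [NormedAddCommGroup E] [InnerProductSpace ℝ E] [CompleteSpace E]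

lemma hasDerivAt_comp_line (φ : E → ℝ) (G x h : E) (t : ℝ)
    (hg : HasGradientAt φ G (x + t • h)) :
    HasDerivAt (fun s : ℝ => φ (x + s • h)) ⟪G, h⟫ t := by
  have hline : HasDerivAt (fun s : ℝ => x + s • h) h t := by
    simpa using ((hasDerivAt_id t).smul_const h).const_add x
  have hf := hasGradientAt_iff_hasFDerivAt.mp hg
  have := hf.comp_hasDerivAt t hline
  exact this

lemma convex_grad_ineq (φ : E → ℝ) (Gf : E → E)
    (hg : ∀ z, HasGradientAt φ (Gf z) z) (hc : ConvexOn ℝ Set.univ φ) (x y : E) :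
    φ x + ⟪Gf x, y - x⟫ ≤ φ y := by
  set h := y - x with hh
  have hder : HasDerivAt (fun s : ℝ => φ (x + s • h)) ⟪Gf x, h⟫ 0 := by
    have := hasDerivAt_comp_line φ (Gf (x + (0 : ℝ) • h)) x h 0 (hg _)
    simpa using this
  have hslope : Tendsto (slope (fun s : ℝ => φ (x + s • h)) 0) (𝓝[>] 0) (𝓝 ⟪Gf x, h⟫) :=
    (hasDerivAt_iff_tendsto_slope.mp hder).mono_left
      (nhdsWithin_mono 0 (by intro z hz; exact ne_of_gt hz))
  have hbound : ∀ᶠ t in 𝓝[>] (0 : ℝ), slope (fun s : ℝ => φ (x + s • h)) 0 t ≤ φ y - φ x := by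
    filter_upwards [Ioo_mem_nhdsGT_of_mem (by norm_num : (0 : ℝ) ∈ Set.Ico 0 1)] with t ht
    have h01 : 0 < t ∧ t < 1 := ⟨ht.1, ht.2⟩
    have hcomb : φ (x + t • h) ≤ (1 - t) * φ x + t * φ y := by
      have hxy : x + t • h = (1 - t) • x + t • y := by
        rw [hh]; module
      rw [hxy]
      have := hc.2 (Set.mem_univ x) (Set.mem_univ y) (by linarith : (0 : ℝ) ≤ 1 - t)
        (le_of_lt h01.1) (by ring)
      simpa using this
    rw [slope_def_field]
    simp only [zero_smul, add_zero, sub_zero]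
    rw [div_le_iff₀ h01.1]
    nlinarith [hcomb]
  have := le_of_tendsto hslope hbound
  linarith [this]

lemma descent_lemma (φ : E → ℝ) (Gf : E → E)
    (hg : ∀ z, HasGradientAt φ (Gf z) z) (L : ℝ)
    (hL : ∀ a b, ‖Gf a - Gf b‖ ≤ L * ‖a - b‖) (x y : E) :
    φ y ≤ φ x + ⟪Gf x, y - x⟫ + L / 2 * ‖y - x‖ ^ 2 := by
  set h := y - x with hh
  set ψ : ℝ → ℝ := fun t => φ (x + t • h) - t * ⟪Gf x, h⟫ - L * t ^ 2 / 2 * ‖h‖ ^ 2 with hψ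
  have hder : ∀ t : ℝ, HasDerivAt ψ
      (⟪Gf (x + t • h), h⟫ - ⟪Gf x, h⟫ - L * t * ‖h‖ ^ 2) t := by
    intro t
    have h1 := hasDerivAt_comp_line φ (Gf (x + t • h)) x h t (hg _)
    have h2 : HasDerivAt (fun s : ℝ => s * ⟪Gf x, h⟫) ⟪Gf x, h⟫ t := by
      simpa using (hasDerivAt_id t).mul_const ⟪Gf x, h⟫
    have h3 : HasDerivAt (fun s : ℝ => L * s ^ 2 / 2 * ‖h‖ ^ 2) (L * t * ‖h‖ ^ 2) t := by
      have := (((hasDerivAt_pow 2 t).const_mul L).div_const 2).mul_const (‖h‖ ^ 2)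
      have e : L * (((2 : ℕ) : ℝ) * t ^ (2 - 1)) / 2 * ‖h‖ ^ 2 = L * t * ‖h‖ ^ 2 := by
        rw [show (2 : ℕ) - 1 = 1 from rfl, pow_one]; push_cast; ring
      rw [e] at this
      exact this
    exact (h1.sub h2).sub h3
  have hanti : AntitoneOn ψ (Set.Icc 0 1) := by
    apply antitoneOn_of_deriv_nonpos (convex_Icc 0 1)
    · have hdiff : Differentiable ℝ ψ := fun t => (hder t).differentiableAt
      exact hdiff.continuous.continuousOn
    · intro t _
      exact (hder t).differentiableAt.differentiableWithinAt
    · intro t ht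
      rw [interior_Icc] at ht
      rw [(hder t).deriv]
      have hb : ⟪Gf (x + t • h) - Gf x, h⟫ ≤ ‖Gf (x + t • h) - Gf x‖ * ‖h‖ :=
        real_inner_le_norm _ _
      have hlip : ‖Gf (x + t • h) - Gf x‖ ≤ L * (t * ‖h‖) := by
        have := hL (x + t • h) x
        simpa [norm_smul, abs_of_pos ht.1, mul_assoc] using this
      have hn : 0 ≤ ‖h‖ := norm_nonneg _
      nlinarith [inner_sub_left (𝕜 := ℝ) (Gf (x + t • h)) (Gf x) h]
  have h01 := hanti (Set.left_mem_Icc.mpr zero_le_one) (Set.right_mem_Icc.mpr zero_le_one)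
    zero_le_one
  have hψ10 : ψ 1 ≤ ψ 0 := h01
  simp only [hψ, one_smul, zero_smul, add_zero, one_pow, zero_pow, mul_zero, mul_one,
    sub_zero, zero_mul] at hψ10
  have hxy : x + h = y := by rw [hh]; abel
  rw [hxy] at hψ10
  linarith

end AuxGradient

section AuxProx

open Filter Topology

variable {d : ℕ}

lemma prox_subgrad (R : Euc d → EReal) (hbot : ∀ x, R x ≠ ⊥) (hconvR : ERealConvexOn R)
    (M : Matrix (Fin d) (Fin d) ℝ) (hM : M.IsHermitian)
    (w u : Euc d) (hprox : IsProxE R M w u) (r : ℝ) (hu : R u = (r : EReal)) (y : Euc d) :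
    ((r + ⟪mdot M (w - u), y - u⟫ : ℝ) : EReal) ≤ R y := by
  set s := mdot M (w - u) with hs
  have hsi : ∀ z : Euc d, ⟪z - u, mdot M (u - w)⟫ = -⟪s, z - u⟫ := by
    intro z
    have hneg : mdot M (u - w) = -s := by
      rw [hs, ← mdot_neg]
      congr 1
      abel
    rw [hneg, inner_neg_right, real_inner_comm]
  have key : ∀ k : ℕ, ∀ z : Euc d,
      ((r + ⟪s, z - u⟫ - (2⁻¹ : ℝ) ^ (k + 1) * qf M (z - u) : ℝ) : EReal) ≤ R z := by
    intro k
    induction k with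
    | zero =>
      intro z
      rcases eq_or_ne (R z) ⊤ with hz | hz
      · rw [hz]; exact le_top
      · have hrz : R z = (((R z).toReal : ℝ) : EReal) := (EReal.coe_toReal hz (hbot z)).symm
        set rz := (R z).toReal
        have h0 := hprox z
        rw [hu, hrz, ← EReal.coe_add, ← EReal.coe_add, EReal.coe_le_coe_iff] at h0
        have hexp : qf M (z - w) = qf M (z - u) + 2 * ⟪z - u, mdot M (u - w)⟫ + qf M (u - w) := by
          have := qf_expand M hM (z - u) (u - w)
          rwa [show z - u + (u - w) = z - w by abel] at this
        rw [hrz, EReal.coe_le_coe_iff]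
        rw [hsi z] at hexp
        rw [pow_one]
        linarith
    | succ k ih =>
      intro z
      rcases eq_or_ne (R z) ⊤ with hz | hz
      · rw [hz]; exact le_top
      · have hrz : R z = (((R z).toReal : ℝ) : EReal) := (EReal.coe_toReal hz (hbot z)).symm
        set rz := (R z).toReal
        have hconv := hconvR u z 2⁻¹ 2⁻¹ (by norm_num) (by norm_num) (by norm_num)
        have hihm := ih ((2⁻¹ : ℝ) • u + (2⁻¹ : ℝ) • z)
        have hmu : (2⁻¹ : ℝ) • u + (2⁻¹ : ℝ) • z - u = (2⁻¹ : ℝ) • (z - u) := by module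
        rw [hmu, qf_smul, real_inner_smul_right] at hihm
        rw [hu, hrz] at hconv
        have hchain := le_trans hihm hconv
        have hco : ((2⁻¹ : ℝ) : EReal) * ((r : ℝ) : EReal)
            + ((2⁻¹ : ℝ) : EReal) * ((rz : ℝ) : EReal)
            = ((2⁻¹ * r + 2⁻¹ * rz : ℝ) : EReal) := by
          rw [← EReal.coe_mul, ← EReal.coe_mul, ← EReal.coe_add]
        rw [hco, EReal.coe_le_coe_iff] at hchain
        rw [hrz, EReal.coe_le_coe_iff]
        have hpow : (2⁻¹ : ℝ) ^ (k + 1 + 1) = 2 * ((2⁻¹ : ℝ) ^ (k + 1) * (2⁻¹ : ℝ) ^ 2) := by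
          ring
        rw [hpow]
        linarith [hchain]
  rcases eq_or_ne (R y) ⊤ with hy | hy
  · rw [hy]; exact le_top
  · have hry : R y = (((R y).toReal : ℝ) : EReal) := (EReal.coe_toReal hy (hbot y)).symm
    set ry := (R y).toReal
    have hk : ∀ k : ℕ, r + ⟪s, y - u⟫ - (2⁻¹ : ℝ) ^ (k + 1) * qf M (y - u) ≤ ry := by
      intro k
      have := key k y
      rw [hry, EReal.coe_le_coe_iff] at this
      exact this
    have hpow : Tendsto (fun k : ℕ => (2⁻¹ : ℝ) ^ (k + 1)) atTop (𝓝 0) :=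
      (tendsto_pow_atTop_nhds_zero_of_lt_one (by norm_num) (by norm_num)).comp
        (tendsto_add_atTop_nat 1)
    have htend : Tendsto (fun k : ℕ => r + ⟪s, y - u⟫ - (2⁻¹ : ℝ) ^ (k + 1) * qf M (y - u))
        atTop (𝓝 (r + ⟪s, y - u⟫ - 0 * qf M (y - u))) :=
      tendsto_const_nhds.sub (hpow.mul_const _)
    have hfin := le_of_tendsto htend (Filter.Eventually.of_forall hk)
    rw [hry, EReal.coe_le_coe_iff]
    linarith

end AuxProx

/-- with the finite-sum setup, `U` symmetric positive definite with
`U ≼ (1/L_Ω)I`, `g = U⁻¹(w_t − prox_R^{U⁻¹}(w_t − Uv))`, `w_{t+1} = w_t − Ug` and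
`δ = ∇F(w_t) − v`, for any minimizer `w_*` of `P`:
`(w_* − w_t)ᵀg + (1/2)‖g‖_U² ≤ P(w_*) − P(w_{t+1}) − ⟨w_* − w_{t+1}, δ⟩`. -/
theorem stochastic_gradient_mapping_bound {d n : ℕ} (hn : 0 < n)
    (f : Fin n → Euc d → ℝ) (gf : Fin n → Euc d → Euc d)
    (hgrad : ∀ i x, HasGradientAt (f i) (gf i x) x)
    (hconvf : ∀ i, ConvexOn ℝ Set.univ (f i))
    (L : Fin n → ℝ) (hLip : ∀ i x y, ‖gf i x - gf i y‖ ≤ L i * ‖x - y‖)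
    (q : Fin n → ℝ) (hq : ∀ i, 0 < q i) (hqs : ∑ i, q i = 1)
    (LΩ : ℝ) (hLΩ : IsGreatest (Set.range fun i => L i / ((n : ℝ) * q i)) LΩ)
    (R : Euc d → EReal) (hproper : ERealProper R) (hlsc : LowerSemicontinuous R)
    (hconvR : ERealConvexOn R)
    (U : Matrix (Fin d) (Fin d) ℝ) (hU : U.PosDef)
    (hUle : (LΩ⁻¹ • (1 : Matrix (Fin d) (Fin d) ℝ) - U).PosSemidef)
    (wt v wprox : Euc d) (hprox : IsProxE R U⁻¹ (wt - mdot U v) wprox)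
    (wstar : Euc d) (hstar : ∀ y, Pobj f R wstar ≤ Pobj f R y) :
    ((⟪wstar - wt, mdot U⁻¹ (wt - wprox)⟫ + 2⁻¹ * qf U (mdot U⁻¹ (wt - wprox)) : ℝ) : EReal)
      ≤ Pobj f R wstar - Pobj f R (wt - mdot U (mdot U⁻¹ (wt - wprox)))
        - ((⟪wstar - (wt - mdot U (mdot U⁻¹ (wt - wprox))), gAvg gf wt - v⟫ : ℝ) : EReal) := by
  -- finiteness facts
  obtain ⟨x0, hx0⟩ := hproper.2
  have hPx0 : Pobj f R x0 ≠ ⊤ :=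
    ne_of_lt (EReal.add_lt_top (EReal.coe_ne_top _) hx0)
  have hPstar : Pobj f R wstar ≠ ⊤ := ne_top_of_le_ne_top hPx0 (hstar x0)
  have hRstar : R wstar ≠ ⊤ := by
    intro h
    apply hPstar
    rw [Pobj, h]
    exact EReal.add_top_of_ne_bot (EReal.coe_ne_bot _)
  have hRs : R wstar = (((R wstar).toReal : ℝ) : EReal) :=
    (EReal.coe_toReal hRstar (hproper.1 wstar)).symm
  set rs := (R wstar).toReal with hrs
  -- R wprox is finite
  have hRprox : R wprox ≠ ⊤ := by
    intro h
    have h0 := hprox x0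
    rw [h] at h0
    have hl : (((2⁻¹ * qf U⁻¹ (wprox - (wt - mdot U v)) : ℝ)) : EReal) + ⊤ = ⊤ :=
      EReal.add_top_of_ne_bot (EReal.coe_ne_bot _)
    rw [hl, top_le_iff] at h0
    have : ((2⁻¹ * qf U⁻¹ (x0 - (wt - mdot U v)) : ℝ) : EReal) + R x0 < ⊤ :=
      EReal.add_lt_top (EReal.coe_ne_top _) hx0
    rw [h0] at this
    exact lt_irrefl _ this
  have hRp : R wprox = (((R wprox).toReal : ℝ) : EReal) :=
    (EReal.coe_toReal hRprox (hproper.1 wprox)).symm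
  set r := (R wprox).toReal with hrr
  -- matrix basics
  have hdet : IsUnit U.det := isUnit_iff_ne_zero.mpr (ne_of_gt hU.det_pos)
  have hUU' : U * U⁻¹ = 1 := Matrix.mul_nonsing_inv U hdet
  have hU'U : U⁻¹ * U = 1 := Matrix.nonsing_inv_mul U hdet
  set z := wt - wprox with hz
  set g := mdot U⁻¹ z with hg
  have hUg : mdot U g = z := by
    rw [hg, mdot_mdot, hUU', mdot_one]
  have hw1 : wt - mdot U (mdot U⁻¹ (wt - wprox)) = wprox := by
    rw [← hz, ← hg, hUg, hz]
    abel
  rw [hw1]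
  -- subgradient inequality from the prox
  have hsub : r + ⟪g - v, wstar - wprox⟫ ≤ rs := by
    have hMH : (U⁻¹).IsHermitian := (hU.inv).1
    have hkey := prox_subgrad R hproper.1 hconvR U⁻¹ hMH (wt - mdot U v) wprox hprox r
      hRp wstar
    have hvec : mdot U⁻¹ (wt - mdot U v - wprox) = g - v := by
      have h1 : wt - mdot U v - wprox = z - mdot U v := by rw [hz]; abel
      rw [h1, mdot_sub, ← hg, mdot_mdot, hU'U, mdot_one]
    rw [hvec] at hkey
    rw [hRs, EReal.coe_le_coe_iff] at hkey
    exact hkey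
  -- convexity inequality for F
  set GF := gAvg gf wt with hGF
  have hnpos : (0 : ℝ) < (n : ℝ) := Nat.cast_pos.mpr hn
  have h1 : Favg f wt + ⟪GF, wstar - wt⟫ ≤ Favg f wstar := by
    have hsum : (∑ i, f i wt) + ⟪∑ i, gf i wt, wstar - wt⟫ ≤ ∑ i, f i wstar := by
      rw [sum_inner, ← Finset.sum_add_distrib]
      exact Finset.sum_le_sum fun i _ =>
        convex_grad_ineq (f i) (gf i) (fun z => hgrad i z) (hconvf i) wt wstar
    have hmul := mul_le_mul_of_nonneg_left hsum (le_of_lt (inv_pos.mpr hnpos))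
    rw [mul_add] at hmul
    rw [Favg, Favg, hGF, gAvg, real_inner_smul_left]
    exact hmul
  -- descent inequality for F
  have h2 : Favg f wprox ≤ Favg f wt + ⟪GF, wprox - wt⟫
      + ((n : ℝ)⁻¹ * ∑ i, L i) / 2 * ‖z‖ ^ 2 := by
    have hnorm : ‖wprox - wt‖ = ‖z‖ := by rw [hz, norm_sub_rev]
    have hsum : (∑ i, f i wprox) ≤ (∑ i, f i wt) + ⟪∑ i, gf i wt, wprox - wt⟫
        + (∑ i, L i) / 2 * ‖z‖ ^ 2 := by
      have hterm : ∀ i : Fin n, f i wprox ≤ f i wt + ⟪gf i wt, wprox - wt⟫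
          + L i / 2 * ‖z‖ ^ 2 := by
        intro i
        have := descent_lemma (f i) (gf i) (fun z => hgrad i z) (L i)
          (fun a b => hLip i a b) wt wprox
        rwa [hnorm] at this
      calc (∑ i, f i wprox) ≤ ∑ i, (f i wt + ⟪gf i wt, wprox - wt⟫ + L i / 2 * ‖z‖ ^ 2) :=
            Finset.sum_le_sum fun i _ => hterm i
        _ = (∑ i, f i wt) + ⟪∑ i, gf i wt, wprox - wt⟫ + (∑ i, L i) / 2 * ‖z‖ ^ 2 := by
            rw [Finset.sum_add_distrib, Finset.sum_add_distrib, sum_inner,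
              ← Finset.sum_mul, ← Finset.sum_div]
    have hmul := mul_le_mul_of_nonneg_left hsum (le_of_lt (inv_pos.mpr hnpos))
    rw [mul_add, mul_add] at hmul
    rw [Favg, Favg, hGF, gAvg, real_inner_smul_left]
    calc (n : ℝ)⁻¹ * ∑ i, f i wprox
        ≤ (n : ℝ)⁻¹ * ∑ i, f i wt + (n : ℝ)⁻¹ * ⟪∑ i, gf i wt, wprox - wt⟫
          + (n : ℝ)⁻¹ * ((∑ i, L i) / 2 * ‖z‖ ^ 2) := hmul
      _ = (n : ℝ)⁻¹ * ∑ i, f i wt + (n : ℝ)⁻¹ * ⟪∑ i, gf i wt, wprox - wt⟫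
          + ((n : ℝ)⁻¹ * ∑ i, L i) / 2 * ‖z‖ ^ 2 := by ring
  -- (1/n) ∑ L i ≤ LΩ
  have hLF : (n : ℝ)⁻¹ * ∑ i, L i ≤ LΩ := by
    have hLi : ∀ i, L i ≤ LΩ * ((n : ℝ) * q i) := by
      intro i
      have h := hLΩ.2 ⟨i, rfl⟩
      have hpos : 0 < (n : ℝ) * q i := mul_pos hnpos (hq i)
      rw [div_le_iff₀ hpos] at h
      linarith
    have hsumL : ∑ i, L i ≤ LΩ * (n : ℝ) := by
      have he : ∀ i : Fin n, LΩ * ((n : ℝ) * q i) = (LΩ * (n : ℝ)) * q i := fun i => by ring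
      calc ∑ i, L i ≤ ∑ i, LΩ * ((n : ℝ) * q i) := Finset.sum_le_sum fun i _ => hLi i
        _ = (LΩ * (n : ℝ)) * ∑ i, q i := by
            rw [Finset.sum_congr rfl fun i _ => he i, ← Finset.mul_sum]
        _ = LΩ * (n : ℝ) := by rw [hqs, mul_one]
    calc (n : ℝ)⁻¹ * ∑ i, L i ≤ (n : ℝ)⁻¹ * (LΩ * (n : ℝ)) :=
          mul_le_mul_of_nonneg_left hsumL (le_of_lt (inv_pos.mpr hnpos))
      _ = LΩ := by field_simp
  -- main case split on d
  rcases Nat.eq_zero_or_pos d with hd | hd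
  · -- degenerate case d = 0
    subst hd
    haveI : Subsingleton (Euc 0) := ⟨fun a b => PiLp.ext fun i => i.elim0⟩
    have hinner : ∀ a b : Euc 0, ⟪a, b⟫ = (0 : ℝ) := by
      intro a b
      rw [PiLp.inner_apply]
      simp
    have hws : wprox = wstar := Subsingleton.elim _ _
    have hPne : Pobj f R wstar ≠ ⊥ := by
      rw [Pobj]
      intro h
      rcases EReal.add_eq_bot_iff.mp h with h' | h'
      · exact EReal.coe_ne_bot _ h'
      · exact hproper.1 wstar h'
    rw [hws]
    have hsub_self : Pobj f R wstar - Pobj f R wstar = 0 := by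
      rw [Pobj, hRs, ← EReal.coe_add, ← EReal.coe_sub]
      norm_num
    have hqg : qf U g = 0 := hinner _ _
    rw [hinner, hinner, hqg, hsub_self]
    norm_num
  · -- main case d > 0 : LΩ > 0
    have hLΩpos : 0 < LΩ := by
      haveI : Nonempty (Fin d) := ⟨⟨0, hd⟩⟩
      obtain ⟨x, hx⟩ := exists_ne (0 : Euc d)
      have hqU : 0 < qf U x := qf_pos hU hx
      have hq1 : 0 ≤ qf (LΩ⁻¹ • (1 : Matrix (Fin d) (Fin d) ℝ) - U) x := qf_nonneg hUle x
      have hq2 : qf (LΩ⁻¹ • (1 : Matrix (Fin d) (Fin d) ℝ) - U) x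
          = LΩ⁻¹ * ⟪x, x⟫ - qf U x := by
        rw [qf, mdot_msub, mdot_msmul, mdot_one, inner_sub_right, real_inner_smul_right, qf]
      have hxx : 0 < ⟪x, x⟫ := by
        rw [real_inner_self_eq_norm_sq]
        exact pow_pos (norm_pos_iff.mpr hx) 2
      have hinv : 0 < LΩ⁻¹ := by nlinarith
      exact inv_pos.mp hinv
    -- matrix inequality : LΩ * ‖z‖² ≤ qf U g
    have h3 : LΩ / 2 * ‖z‖ ^ 2 ≤ 2⁻¹ * qf U g := by
      have hS := hU.posSemidef
      open scoped MatrixOrder in set S := CFC.sqrt U with hSd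
      have hSS : S * S = U := open scoped MatrixOrder in CFC.sqrt_mul_sqrt_self U hS.nonneg
      have hSh : S.conjTranspose = S := open scoped MatrixOrder in (Matrix.nonneg_iff_posSemidef.mp (CFC.sqrt_nonneg U)).1
      have hconj := hUle.conjTranspose_mul_mul_same S
      have hmat : S.conjTranspose * (LΩ⁻¹ • (1 : Matrix (Fin d) (Fin d) ℝ) - U) * S
          = LΩ⁻¹ • U - U * U := by
        rw [hSh, ← hSS]
        noncomm_ring
      rw [hmat] at hconj
      have h0 := qf_nonneg hconj g
      have hq2 : qf (LΩ⁻¹ • U - U * U) g = LΩ⁻¹ * qf U g - ⟪g, mdot (U * U) g⟫ := by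
        rw [qf, mdot_msub, mdot_msmul, inner_sub_right, real_inner_smul_right, qf]
      have hq3 : ⟪g, mdot (U * U) g⟫ = ‖z‖ ^ 2 := by
        rw [← mdot_mdot, ← inner_mdot_comm U hU.1, hUg, real_inner_self_eq_norm_sq]
      rw [hq2, hq3] at h0
      have : LΩ * ‖z‖ ^ 2 ≤ qf U g := by
        have hmul := mul_le_mul_of_nonneg_left (by linarith : ‖z‖ ^ 2 ≤ LΩ⁻¹ * qf U g)
          (le_of_lt hLΩpos)
        calc LΩ * ‖z‖ ^ 2 ≤ LΩ * (LΩ⁻¹ * qf U g) := hmul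
          _ = qf U g := by field_simp
      linarith
    -- final assembly
    rw [Pobj, Pobj, hRs, hRp, ← EReal.coe_add, ← EReal.coe_add, ← EReal.coe_sub,
      ← EReal.coe_sub, EReal.coe_le_coe_iff]
    -- inner product identities
    have e1 : ⟪GF, wstar - wt⟫ = ⟪GF, wstar - wprox⟫ + ⟪GF, wprox - wt⟫ := by
      rw [← inner_add_right]
      congr 1
      abel
    have e2 : ⟪wstar - wprox, GF - v⟫ = ⟪GF, wstar - wprox⟫ - ⟪v, wstar - wprox⟫ := by
      rw [inner_sub_right, real_inner_comm (wstar - wprox) GF,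
        real_inner_comm (wstar - wprox) v]
    have e3 : ⟪g - v, wstar - wprox⟫ = ⟪g, wstar - wprox⟫ - ⟪v, wstar - wprox⟫ :=
      inner_sub_left _ _ _
    have e4 : ⟪g, wstar - wprox⟫ = ⟪g, wstar - wt⟫ + ⟪g, z⟫ := by
      rw [← inner_add_right]
      congr 1
      rw [hz]
      abel
    have e5 : ⟪wstar - wt, g⟫ = ⟪g, wstar - wt⟫ := real_inner_comm _ _
    have e6 : qf U g = ⟪g, z⟫ := by rw [qf, hUg]
    have hN : (0 : ℝ) ≤ ‖z‖ ^ 2 := by positivity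
    have h2' : Favg f wprox ≤ Favg f wt + ⟪GF, wprox - wt⟫ + LΩ / 2 * ‖z‖ ^ 2 := by
      have hmono : ((n : ℝ)⁻¹ * ∑ i, L i) / 2 * ‖z‖ ^ 2 ≤ LΩ / 2 * ‖z‖ ^ 2 := by
        have := mul_le_mul_of_nonneg_right hLF hN
        linarith
      linarith [h2, hmono]
    -- conclude by linear arithmetic
    rw [e5, e6]
    linarith [h1, h2', h3, hsub, e1, e2, e3, e4]
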